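/- arXiv:1910.09351 — 5 statements merged into one kernel-verified Lean document; each statement's English description precedes it below -/
import Mathlib

section
/- Let N ≥ 1 and K ≥ 0 be integers, let y ∈ ℝ^N, and let f_0, f_1, …, f_K ∈ ℝ^N be linearly independent. If ⟨f_j − y, f_j⟩ ≠ 0 for every j ∈ {0,…,K}, then there exists θ ∈ ℝ^{K+1} such that ‖Σ_{j=0}^{K} θ_j f_j − y‖² < min_{j ∈ {0,…,K}} ‖f_j − y‖². -/
open scoped InnerProductSpace

/-- If `f_0, …, f_K` are linearly independent and `⟨f_j − y, f_j⟩ ≠ 0` for every `j`,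
then some linear combination beats every single component:
`∃ θ, ‖∑ j θ_j f_j − y‖² < min_j ‖f_j − y‖²`. -/
theorem stmt_4 (N K : ℕ) (hN : 1 ≤ N)
    (f : Fin (K + 1) → EuclideanSpace ℝ (Fin N)) (y : EuclideanSpace ℝ (Fin N))
    (hf : LinearIndependent ℝ f)
    (h : ∀ j, ⟪f j - y, f j⟫_ℝ ≠ 0) :
    ∃ θ : Fin (K + 1) → ℝ,
      ‖(∑ j, θ j • f j) - y‖ ^ 2 <
        Finset.univ.inf' Finset.univ_nonempty (fun j => ‖f j - y‖ ^ 2) := by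
  obtain ⟨j₀, -, hj₀⟩ := Finset.exists_mem_eq_inf' Finset.univ_nonempty
    (fun j => ‖f j - y‖ ^ 2)
  set a : ℝ := ‖f j₀‖ ^ 2 with ha
  set b : ℝ := ⟪y, f j₀⟫_ℝ with hb
  have hfne : f j₀ ≠ 0 := hf.ne_zero j₀
  have hapos : 0 < a := by
    have : 0 < ‖f j₀‖ := norm_pos_iff.mpr hfne
    positivity
  have hab : a - b ≠ 0 := by
    have := h j₀
    rw [inner_sub_left, real_inner_self_eq_norm_sq] at this
    simpa [ha, hb] using this
  set t : ℝ := b / a with ht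
  refine ⟨fun j => if j = j₀ then t else 0, ?_⟩
  rw [hj₀]
  have hsum : (∑ j, (if j = j₀ then t else 0) • f j) = t • f j₀ := by
    simp [ite_smul]
  rw [hsum]
  have e1 : ‖t • f j₀ - y‖ ^ 2 = t ^ 2 * a - 2 * (t * b) + ‖y‖ ^ 2 := by
    rw [norm_sub_sq_real, inner_smul_left, norm_smul, real_inner_comm]
    simp [ha, hb, mul_pow, abs_sq]
  have e2 : ‖f j₀ - y‖ ^ 2 = a - 2 * b + ‖y‖ ^ 2 := by
    rw [norm_sub_sq_real, real_inner_comm]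
  rw [e1, e2, ht]
  have hsq : 0 < (a - b) ^ 2 := by positivity
  have h1 : b / a * a = b := div_mul_cancel₀ b hapos.ne'
  nlinarith [h1, hapos, hsq, sq_nonneg (b / a)]
end

section
/- Let σ : ℝ → ℝ be admissible, i.e., σ is twice continuously differentiable and there exists z₀ ∈ ℝ with σ′(z₀) ≠ 0. Then for every finite list of real numbers a_1, …, a_N and every ε with 0 < ε ≤ 1, there exist real numbers p, q, r, s such that |p·σ(q·a_i + r) + s − a_i| < ε for every i ∈ {1,…,N}. (Equivalently: an affine map composed with σ composed with an affine map approximates the identity to within ε on any finite set of reals.) -/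
/-- If `σ` is admissible (C² with `σ′(z₀) ≠ 0` for some `z₀`), then for every finite list
of reals and every `0 < ε ≤ 1`, an affine map composed with `σ` composed with an affine
map approximates the identity within `ε` on that list. -/
theorem stmt_8 (σ : ℝ → ℝ) (hσ : ContDiff ℝ 2 σ) (z₀ : ℝ) (hz₀ : deriv σ z₀ ≠ 0)
    (N : ℕ) (a : Fin N → ℝ) (ε : ℝ) (hε : 0 < ε) (hε1 : ε ≤ 1) :
    ∃ p q r s : ℝ, ∀ i : Fin N, |p * σ (q * a i + r) + s - a i| < ε := by
  have hdσ : HasDerivAt σ (deriv σ z₀) z₀ :=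
    ((hσ.differentiable (by norm_num)) z₀).hasDerivAt
  set d := deriv σ z₀ with hd
  -- for each i, the slope expression tends to 0
  have key : ∀ i : Fin N, Filter.Tendsto
      (fun q : ℝ => (σ (q * a i + z₀) - σ z₀) / (q * d) - a i)
      (nhdsWithin 0 {0}ᶜ) (nhds 0) := by
    intro i
    have hinner : HasDerivAt (fun q : ℝ => q * a i + z₀) (1 * a i) 0 :=
      ((hasDerivAt_id (0:ℝ)).mul_const (a i)).add_const z₀
    have hcomp : HasDerivAt (fun q : ℝ => σ (q * a i + z₀)) (d * (1 * a i)) 0 := by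
      have h0 : (0 : ℝ) * a i + z₀ = z₀ := by ring
      exact (h0 ▸ hdσ).comp 0 hinner
    have hslope := hasDerivAt_iff_tendsto_slope.mp hcomp
    have h1 : Filter.Tendsto
        (fun q : ℝ => slope (fun q : ℝ => σ (q * a i + z₀)) 0 q / d - a i)
        (nhdsWithin 0 {0}ᶜ) (nhds (d * (1 * a i) / d - a i)) :=
      (hslope.div_const d).sub_const (a i)
    have h2 : d * (1 * a i) / d - a i = 0 := by field_simp; ring
    rw [h2] at h1
    refine h1.congr (fun q => ?_)
    simp only [slope_def_field]
    have : (0 : ℝ) * a i + z₀ = z₀ := by ring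
    rw [this]
    rw [sub_zero, div_div]
  have hev : ∀ᶠ q in nhdsWithin (0:ℝ) {0}ᶜ,
      ∀ i : Fin N, |(σ (q * a i + z₀) - σ z₀) / (q * d) - a i| < ε := by
    rw [Filter.eventually_all]
    intro i
    have := (key i).eventually (Metric.ball_mem_nhds 0 hε)
    filter_upwards [this] with q hq
    simpa [Real.dist_eq] using hq
  obtain ⟨q, hq, hqne⟩ := (hev.and self_mem_nhdsWithin).exists
  refine ⟨(q * d)⁻¹, q, z₀, -σ z₀ * (q * d)⁻¹, fun i => ?_⟩
  have hqne' : q ≠ 0 := hqne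
  have heq : (q * d)⁻¹ * σ (q * a i + z₀) + -σ z₀ * (q * d)⁻¹ - a i
      = (σ (q * a i + z₀) - σ z₀) / (q * d) - a i := by
    field_simp
    ring
  rw [heq]
  exact hq i
end

section
/- Let N ≥ 1 and K ≥ 1 be integers, let y, f_1, …, f_K ∈ ℝ^N, and let f_0 = (1,1,…,1) ∈ ℝ^N be the all-ones vector. Assume that f_0, f_1, …, f_K are linearly independent, that ⟨f_j − y, f_j⟩ ≠ 0 for every j ∈ {0,…,K}, and that σ : ℝ → ℝ is admissible (twice continuously differentiable with σ′(z₀) ≠ 0 for some z₀ ∈ ℝ). Then there exist θ ∈ ℝ^{K+1} and p, s ∈ ℝ such that the single-hidden-layer composite network output g ∈ ℝ^N, defined coordinatewise by g_i = p·σ(Σ_{j=0}^{K} θ_j (f_j)_i) + s, satisfies ‖g − y‖² < min_{j ∈ {0,…,K}} ‖f_j − y‖². -/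
open scoped InnerProductSpace
open Filter

/-- Single-layer composite network: if `f_0` is the all-ones vector, `f_0, …, f_K` are
linearly independent, `⟨f_j − y, f_j⟩ ≠ 0` for all `j`, and `σ` is admissible, then there
is a network `g_i = p·σ(∑ j θ_j (f_j)_i) + s` with
`‖g − y‖² < min_j ‖f_j − y‖²`. -/
theorem stmt_10 (N K : ℕ) (hN : 1 ≤ N) (hK : 1 ≤ K)
    (y : EuclideanSpace ℝ (Fin N)) (f : Fin (K + 1) → EuclideanSpace ℝ (Fin N))
    (hf0 : ∀ i, f 0 i = 1)
    (hli : LinearIndependent ℝ f)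
    (hnp : ∀ j, ⟪f j - y, f j⟫_ℝ ≠ 0)
    (σ : ℝ → ℝ) (hσ : ContDiff ℝ 2 σ) (z₀ : ℝ) (hz₀ : deriv σ z₀ ≠ 0) :
    ∃ (θ : Fin (K + 1) → ℝ) (p s : ℝ) (g : EuclideanSpace ℝ (Fin N)),
      (∀ i, g i = p * σ (∑ j, θ j * f j i) + s) ∧
      ‖g - y‖ ^ 2 < Finset.univ.inf' Finset.univ_nonempty (fun j => ‖f j - y‖ ^ 2) := by
  classical
  set m := Finset.univ.inf' Finset.univ_nonempty (fun j => ‖f j - y‖ ^ 2) with hm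
  set D := deriv σ z₀ with hD
  have hnorm : ∀ x : EuclideanSpace ℝ (Fin N), ‖x‖ ^ 2 = ∑ i, (x i) ^ 2 := by
    intro x
    rw [EuclideanSpace.norm_eq, Real.sq_sqrt (by positivity)]
    simp [sq_abs]
  -- slope tendsto lemma
  have hcoord : ∀ x : ℝ, Tendsto (fun ε => (σ (z₀ + ε * x) - σ z₀) / ε)
      (nhdsWithin (0:ℝ) {0}ᶜ) (nhds (D * x)) := by
    intro x
    have h1 : HasDerivAt (fun ε : ℝ => z₀ + ε * x) x 0 := by
      simpa using ((hasDerivAt_id (0:ℝ)).mul_const x).const_add z₀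
    have h2' : HasDerivAt σ D z₀ :=
      ((hσ.differentiable (by norm_num)).differentiableAt).hasDerivAt
    have h2 : HasDerivAt σ D (z₀ + 0 * x) := by simpa using h2'
    have h3 := h2.comp 0 h1
    rw [hasDerivAt_iff_tendsto_slope] at h3
    refine h3.congr fun ε => ?_
    simp [slope_def_field]
  -- key construction lemma
  have key : ∀ (k : Fin (K + 1)) (c d : ℝ), k ≠ 0 →
      ‖(c • f k + d • f 0) - y‖ ^ 2 < m →
      ∃ (θ : Fin (K + 1) → ℝ) (p s : ℝ) (g : EuclideanSpace ℝ (Fin N)),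
        (∀ i, g i = p * σ (∑ j, θ j * f j i) + s) ∧ ‖g - y‖ ^ 2 < m := by
    intro k c d hk hv
    have hv' : ∑ i, (c * f k i + d - y i) ^ 2 < m := by
      have : ‖(c • f k + d • f 0) - y‖ ^ 2 = ∑ i, (c * f k i + d - y i) ^ 2 := by
        rw [hnorm]
        refine Finset.sum_congr rfl fun i _ => ?_
        simp [hf0 i]
      linarith [hv, this ▸ hv]
    set S : ℝ → ℝ := fun ε => ∑ i, (c / D * ((σ (z₀ + ε * f k i) - σ z₀) / ε) + d - y i) ^ 2
      with hSdef
    have hS : Tendsto S (nhdsWithin (0:ℝ) {0}ᶜ) (nhds (∑ i, (c * f k i + d - y i) ^ 2)) := by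
      apply tendsto_finset_sum
      intro i _
      have h1 := (((hcoord (f k i)).const_mul (c / D)).add_const d).sub_const (y i)
      have h2 : c / D * (D * f k i) + d - y i = c * f k i + d - y i := by
        field_simp
      rw [h2] at h1
      exact h1.pow 2
    have hev : ∀ᶠ ε in nhdsWithin (0:ℝ) {0}ᶜ, S ε < m ∧ ε ≠ 0 := by
      filter_upwards [hS.eventually (Filter.Tendsto.eventually_lt_const hv' tendsto_id)
        , self_mem_nhdsWithin] with ε h1 h2
      exact ⟨h1, h2⟩
    obtain ⟨ε, hSε, hεne⟩ := hev.exists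
    refine ⟨fun j => (if j = 0 then z₀ else 0) + (if j = k then ε else 0),
      c / (D * ε), d - c / (D * ε) * σ z₀,
      (WithLp.equiv 2 (Fin N → ℝ)).symm
        (fun i => c / (D * ε) * σ (z₀ + ε * f k i) + (d - c / (D * ε) * σ z₀)), ?_, ?_⟩
    · intro i
      have hsum : ∑ j, ((if j = 0 then z₀ else 0) + (if j = k then ε else 0)) * f j i
          = z₀ + ε * f k i := by
        simp only [add_mul, ite_mul, zero_mul, Finset.sum_add_distrib]
        rw [Finset.sum_ite_eq' Finset.univ (0 : Fin (K+1)) (fun j => z₀ * f j i),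
          Finset.sum_ite_eq' Finset.univ k (fun j => ε * f j i)]
        simp [hf0 i]
      rw [hsum]
      simp [WithLp.equiv_symm_apply, PiLp.toLp_apply]
    · have hg : ∀ i, ((WithLp.equiv 2 (Fin N → ℝ)).symm
          (fun i => c / (D * ε) * σ (z₀ + ε * f k i) + (d - c / (D * ε) * σ z₀))
            : EuclideanSpace ℝ (Fin N)) i
          = c / D * ((σ (z₀ + ε * f k i) - σ z₀) / ε) + d := by
        intro i
        simp only [WithLp.equiv_symm_apply, PiLp.toLp_apply]
        field_simp
        ring
      calc ‖_ - y‖ ^ 2 = S ε := by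
            rw [hnorm]
            refine Finset.sum_congr rfl fun i _ => ?_
            rw [PiLp.sub_apply, hg i]
        _ < m := hSε
  -- assemble
  have hdec : ∀ j : Fin (K + 1),
      ‖(1 - ⟪f j - y, f j⟫_ℝ / ‖f j‖ ^ 2) • f j - y‖ ^ 2 < ‖f j - y‖ ^ 2 := by
    intro j
    have hfj : f j ≠ 0 := by
      intro h
      exact hnp j (by simp [h])
    have hn2 : (0:ℝ) < ‖f j‖ ^ 2 := by
      have : ‖f j‖ ≠ 0 := norm_ne_zero_iff.mpr hfj
      positivity
    set a := ⟪f j - y, f j⟫_ℝ with ha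
    set t := a / ‖f j‖ ^ 2 with ht
    have heq : (1 - t) • f j - y = (f j - y) - t • f j := by
      rw [sub_smul, one_smul]; abel
    rw [heq, norm_sub_sq_real, real_inner_smul_right, norm_smul]
    have h1 : (‖t‖ * ‖f j‖) ^ 2 = t ^ 2 * ‖f j‖ ^ 2 := by
      rw [mul_pow]; simp [sq_abs]
    rw [h1]
    have ha2 : (0:ℝ) < a ^ 2 := pow_pos (abs_pos.mpr (hnp j)) 2 |>.trans_eq (sq_abs a) |>.trans_le le_rfl
    have h2 : t * a = a ^ 2 / ‖f j‖ ^ 2 := by rw [ht]; field_simp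
    have h3 : t ^ 2 * ‖f j‖ ^ 2 = a ^ 2 / ‖f j‖ ^ 2 := by rw [ht]; field_simp
    rw [h2, h3]
    have : 0 < a ^ 2 / ‖f j‖ ^ 2 := div_pos ha2 hn2
    linarith
  obtain ⟨j, -, hj⟩ := Finset.exists_mem_eq_inf' (Finset.univ_nonempty)
    (fun j : Fin (K+1) => ‖f j - y‖ ^ 2)
  by_cases hj0 : j = 0
  · have hk1 : (⟨1, by omega⟩ : Fin (K + 1)) ≠ 0 := by
      intro h
      simpa using congrArg Fin.val h
    refine key ⟨1, by omega⟩ 0 (1 - ⟪f 0 - y, f 0⟫_ℝ / ‖f 0‖ ^ 2) hk1 ?_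
    rw [zero_smul, zero_add]
    calc ‖(1 - ⟪f 0 - y, f 0⟫_ℝ / ‖f 0‖ ^ 2) • f 0 - y‖ ^ 2
        < ‖f 0 - y‖ ^ 2 := hdec 0
      _ = m := by rw [hm, hj, hj0]
  · refine key j (1 - ⟪f j - y, f j⟫_ℝ / ‖f j‖ ^ 2) 0 hj0 ?_
    rw [zero_smul, add_zero]
    calc ‖(1 - ⟪f j - y, f j⟫_ℝ / ‖f j‖ ^ 2) • f j - y‖ ^ 2
        < ‖f j - y‖ ^ 2 := hdec j
      _ = m := by rw [hm, hj]
end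

section
/- Let N ≥ 1, let g, f, y ∈ ℝ^N, and let σ : ℝ → ℝ be admissible (twice continuously differentiable with σ′(z₀) ≠ 0 for some z₀ ∈ ℝ). If ⟨g − y, g⟩ ≠ 0 or ⟨g − y, f⟩ ≠ 0, then there exist real numbers p, s, β_0, β_1, β_2 such that the vector h ∈ ℝ^N defined coordinatewise by h_i = p·σ(β_0 + β_1 g_i + β_2 f_i) + s satisfies ‖h − y‖² < ‖g − y‖². -/
open scoped InnerProductSpace

open Filter Finset

lemma normsq_eq {N : ℕ} (x : EuclideanSpace ℝ (Fin N)) : ‖x‖ ^ 2 = ∑ i, x i ^ 2 := by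
  rw [EuclideanSpace.norm_eq, Real.sq_sqrt (by positivity)]
  simp [Real.norm_eq_abs, sq_abs]

lemma improve {N : ℕ} (g y v : EuclideanSpace ℝ (Fin N))
    (hd : ⟪g - y, v⟫_ℝ ≠ 0) : ∃ c : ℝ, ‖g + c • v - y‖ ^ 2 < ‖g - y‖ ^ 2 := by
  set d : ℝ := ⟪g - y, v⟫_ℝ with hdv
  refine ⟨-d / (1 + ‖v‖ ^ 2), ?_⟩
  have hE : g + (-d / (1 + ‖v‖ ^ 2)) • v - y = (g - y) + (-d / (1 + ‖v‖ ^ 2)) • v := by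
    abel
  rw [hE, norm_add_sq_real, real_inner_smul_right, norm_smul]
  have hv : (0:ℝ) ≤ ‖v‖ ^ 2 := by positivity
  have hd2 : (0:ℝ) < d ^ 2 := by positivity
  have h1 : (0:ℝ) < 1 + ‖v‖ ^ 2 := by positivity
  rw [mul_pow, ← hdv]
  have hno : (‖-d / (1 + ‖v‖ ^ 2)‖ : ℝ) ^ 2 = (d / (1 + ‖v‖ ^ 2)) ^ 2 := by
    rw [Real.norm_eq_abs, sq_abs]; ring
  rw [hno]
  have h2 : (0:ℝ) < (1 + ‖v‖ ^ 2) ^ 2 := by positivity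
  have key : 2 * (-d / (1 + ‖v‖ ^ 2) * d) + (d / (1 + ‖v‖ ^ 2)) ^ 2 * ‖v‖ ^ 2 < 0 := by
    have e1 : 2 * (-d / (1 + ‖v‖ ^ 2) * d) = (-(2 * d ^ 2)) / (1 + ‖v‖ ^ 2) := by ring
    have e2 : (d / (1 + ‖v‖ ^ 2)) ^ 2 * ‖v‖ ^ 2 = d ^ 2 * ‖v‖ ^ 2 / (1 + ‖v‖ ^ 2) ^ 2 := by
      rw [div_pow, div_mul_eq_mul_div]
    rw [e1, e2, div_add_div _ _ (ne_of_gt h1) (ne_of_gt h2)]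
    apply div_neg_of_neg_of_pos
    · nlinarith
    · positivity
  linarith

/-- Adding a component in a new layer: if `⟨g − y, g⟩ ≠ 0` or `⟨g − y, f⟩ ≠ 0` and `σ` is
admissible, then some `h_i = p·σ(β₀ + β₁ g_i + β₂ f_i) + s` satisfies
`‖h − y‖² < ‖g − y‖²`. -/
theorem stmt_14 (N : ℕ) (hN : 1 ≤ N) (g f y : EuclideanSpace ℝ (Fin N))
    (σ : ℝ → ℝ) (hσ : ContDiff ℝ 2 σ) (z₀ : ℝ) (hz₀ : deriv σ z₀ ≠ 0)
    (hne : ⟪g - y, g⟫_ℝ ≠ 0 ∨ ⟪g - y, f⟫_ℝ ≠ 0) :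
    ∃ (p s β₀ β₁ β₂ : ℝ) (h : EuclideanSpace ℝ (Fin N)),
      (∀ i, h i = p * σ (β₀ + β₁ * g i + β₂ * f i) + s) ∧
      ‖h - y‖ ^ 2 < ‖g - y‖ ^ 2 := by
  -- Step 1: find a, b with ‖a•g + b•f − y‖² < ‖g − y‖²
  obtain ⟨a, b, hw⟩ : ∃ a b : ℝ, ‖a • g + b • f - y‖ ^ 2 < ‖g - y‖ ^ 2 := by
    rcases hne with h1 | h2
    · obtain ⟨c, hc⟩ := improve g y g h1
      refine ⟨1 + c, 0, ?_⟩
      have : (1 + c) • g + (0:ℝ) • f = g + c • g := by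
        rw [add_smul, one_smul, zero_smul, add_zero]
      rwa [this]
    · obtain ⟨c, hc⟩ := improve g y f h2
      refine ⟨1, c, ?_⟩
      rwa [one_smul]
  set w : EuclideanSpace ℝ (Fin N) := a • g + b • f with hwdef
  have hwi : ∀ i, w i = a * g i + b * f i := by
    intro i; simp [hwdef]
  -- Step 2: limit argument
  have hdσ : Differentiable ℝ σ := hσ.differentiable (by norm_num)
  set E : ℝ → ℝ := fun t =>
    ∑ i, ((σ (z₀ + t * (a * g i + b * f i)) - σ z₀) / (t * deriv σ z₀) - y i) ^ 2 with hEdef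
  have hlim : Tendsto E (nhdsWithin 0 {(0:ℝ)}ᶜ) (nhds (‖w - y‖ ^ 2)) := by
    have hnw : ‖w - y‖ ^ 2 = ∑ i, (w i - y i) ^ 2 := by
      rw [normsq_eq]; rfl
    rw [hnw]
    apply tendsto_finset_sum
    intro i _
    set c : ℝ := a * g i + b * f i with hc
    have hF : HasDerivAt (fun t : ℝ => σ (z₀ + t * c)) (deriv σ z₀ * c) 0 := by
      have h1 : HasDerivAt (fun t : ℝ => z₀ + t * c) c 0 :=
        (hasDerivAt_mul_const c).const_add z₀
      have h2 : HasDerivAt σ (deriv σ z₀) (z₀ + 0 * c) := by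
        simpa using (hdσ z₀).hasDerivAt
      exact h2.comp 0 h1
    have hslope := hasDerivAt_iff_tendsto_slope.mp hF
    have hφ : Tendsto (fun t : ℝ => (σ (z₀ + t * c) - σ z₀) / (t * deriv σ z₀))
        (nhdsWithin 0 {(0:ℝ)}ᶜ) (nhds c) := by
      have h3 : Tendsto (fun t : ℝ => slope (fun t : ℝ => σ (z₀ + t * c)) 0 t / deriv σ z₀)
          (nhdsWithin 0 {(0:ℝ)}ᶜ) (nhds (deriv σ z₀ * c / deriv σ z₀)) :=
        hslope.div_const _
      rw [show deriv σ z₀ * c / deriv σ z₀ = c from by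
        rw [mul_comm, mul_div_assoc, div_self hz₀, mul_one]] at h3
      apply h3.congr'
      filter_upwards [self_mem_nhdsWithin] with t ht
      rw [slope_def_field]
      simp only [sub_zero]
      rw [div_div]
      congr 2
      simp
    have := (hφ.sub_const (y i)).pow 2
    simpa [hwi i] using this
  have hev : ∀ᶠ t in nhdsWithin (0:ℝ) {(0:ℝ)}ᶜ, E t < ‖g - y‖ ^ 2 :=
    hlim.eventually_lt_const hw
  obtain ⟨t, htE, htne⟩ := (hev.and self_mem_nhdsWithin).exists
  have htne' : t ≠ 0 := htne
  have hD : t * deriv σ z₀ ≠ 0 := mul_ne_zero htne' hz₀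
  refine ⟨(t * deriv σ z₀)⁻¹, -σ z₀ * (t * deriv σ z₀)⁻¹, z₀, t * a, t * b,
    (WithLp.toLp 2 (fun i => (σ (z₀ + t * (a * g i + b * f i)) - σ z₀) / (t * deriv σ z₀)) :
      EuclideanSpace ℝ (Fin N)), ?_, ?_⟩
  · intro i
    rw [WithLp.ofLp_toLp]
    have harg : z₀ + t * a * g i + t * b * f i = z₀ + t * (a * g i + b * f i) := by ring
    rw [harg]
    field_simp
    ring
  · calc ‖_ - y‖ ^ 2 = E t := by rw [hEdef, normsq_eq]; rfl
      _ < ‖g - y‖ ^ 2 := htE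
end

section
/- Let σ : ℝ → ℝ be admissible, i.e., twice continuously differentiable with σ′(z₀) ≠ 0 for some z₀ ∈ ℝ, and let H ≥ 1 be an integer. Then for every finite list of real numbers a_1, …, a_N and every ε > 0, there exist affine maps A_0, A_1, …, A_H : ℝ → ℝ such that the depth-H alternating composition satisfies |(A_H ∘ σ ∘ A_{H−1} ∘ σ ∘ ⋯ ∘ σ ∘ A_0)(a_i) − a_i| < ε for every i ∈ {1,…,N}. (That is, an H-fold affine–σ–affine network can approximate the identity to within ε on any finite set of reals.) -/
def altComp (σ : ℝ → ℝ) : (H : ℕ) → (Fin (H + 1) → ℝ → ℝ) → ℝ → ℝ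
  | 0, A, x => A 0 x
  | H + 1, A, x => A (Fin.last (H + 1)) (σ (altComp σ H (fun k => A (Fin.castSucc k)) x))

lemma altComp_snoc (σ : ℝ → ℝ) (H : ℕ) (B : Fin (H + 1) → ℝ → ℝ) (f : ℝ → ℝ) (x : ℝ) :
    altComp σ (H + 1) (Fin.snoc B f) x = f (σ (altComp σ H B x)) := by
  show (Fin.snoc B f : Fin (H+2) → ℝ → ℝ) (Fin.last (H+1))
      (σ (altComp σ H (fun k => (Fin.snoc B f : Fin (H+2) → ℝ → ℝ) (Fin.castSucc k)) x)) = _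
  simp [Fin.snoc_last, Fin.snoc_castSucc]

lemma key (σ : ℝ → ℝ) (hσ : ContDiff ℝ 2 σ) (z₀ : ℝ) (hz₀ : deriv σ z₀ ≠ 0)
    (N : ℕ) (a : Fin N → ℝ) :
    ∀ (H : ℕ) (p q ε : ℝ), 0 < ε →
    ∃ A : Fin (H + 1) → ℝ → ℝ,
      (∀ k, ∃ c d : ℝ, A k = fun x => c * x + d) ∧
      ∀ i : Fin N, |altComp σ H A (a i) - (p * a i + q)| < ε := by
  intro H
  induction H with
  | zero =>
    intro p q ε hε
    exact ⟨fun _ => fun x => p * x + q, fun _ => ⟨p, q, rfl⟩,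
      fun i => by simpa [altComp] using hε⟩
  | succ H IH =>
    intro p q ε hε
    set c := deriv σ z₀ with hc
    have hcabs : 0 < |c| := abs_pos.mpr hz₀
    set ε' : ℝ := ε / (2 * (|p| + 1)) with hε'def
    have hpos : (0:ℝ) < |p| + 1 := by positivity
    have hε' : 0 < ε' := by positivity
    -- derivative / slope limit
    have hd : HasDerivAt σ c z₀ :=
      ((hσ.differentiable (by norm_num)) z₀).hasDerivAt
    have hslope : Filter.Tendsto (slope σ z₀) (nhdsWithin z₀ {z₀}ᶜ) (nhds c) :=
      hasDerivAt_iff_tendsto_slope.mp hd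
    -- for each i, eventually good δ
    have hlim : ∀ i : Fin N, Filter.Tendsto
        (fun δ : ℝ => (σ (z₀ + δ * a i) - σ z₀) / (δ * c)) (nhdsWithin 0 (Set.Ioi 0))
        (nhds (a i)) := by
      intro i
      by_cases hx : a i = 0
      · simpa [hx] using
          (tendsto_const_nhds : Filter.Tendsto (fun _ : ℝ => (0:ℝ))
            (nhdsWithin 0 (Set.Ioi 0)) (nhds 0))
      · have h1 : Filter.Tendsto (fun δ : ℝ => z₀ + δ * a i) (nhdsWithin 0 (Set.Ioi 0))
            (nhdsWithin z₀ {z₀}ᶜ) := by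
          rw [tendsto_nhdsWithin_iff]
          constructor
          · have : Filter.Tendsto (fun δ : ℝ => z₀ + δ * a i) (nhds 0)
                (nhds (z₀ + 0 * a i)) := by
              exact (continuous_const.add (continuous_id.mul continuous_const)).tendsto 0
            simpa using this.mono_left nhdsWithin_le_nhds
          · filter_upwards [self_mem_nhdsWithin] with δ hδ
            have : δ * a i ≠ 0 := mul_ne_zero (ne_of_gt hδ) hx
            simp [this]
        have h2 := (hslope.comp h1).mul_const (a i)
        have h3 := h2.div_const c
        have hval : c * a i / c = a i := by field_simp
        rw [hval] at h3
        refine h3.congr' ?_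
        filter_upwards [self_mem_nhdsWithin] with δ hδ
        have hδ0 : δ ≠ 0 := ne_of_gt hδ
        show slope σ z₀ (z₀ + δ * a i) * a i / c = (σ (z₀ + δ * a i) - σ z₀) / (δ * c)
        rw [slope_def_field]
        field_simp
        ring
    have hev : ∀ i : Fin N, ∀ᶠ δ in nhdsWithin (0:ℝ) (Set.Ioi 0),
        |(σ (z₀ + δ * a i) - σ z₀) / (δ * c) - a i| < ε' ∧ δ * |a i| ≤ 1/2 := by
      intro i
      have e1 : ∀ᶠ δ in nhdsWithin (0:ℝ) (Set.Ioi 0),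
          |(σ (z₀ + δ * a i) - σ z₀) / (δ * c) - a i| < ε' := by
        have := Metric.tendsto_nhds.mp (hlim i) ε' hε'
        simpa [Real.dist_eq] using this
      have e2 : ∀ᶠ δ in nhdsWithin (0:ℝ) (Set.Ioi 0), δ * |a i| ≤ 1/2 := by
        have h0 : Filter.Tendsto (fun δ : ℝ => δ * |a i|) (nhds 0) (nhds (0 * |a i|)) :=
          ((continuous_id : Continuous fun x : ℝ => x).mul continuous_const).tendsto 0
        have h : Filter.Tendsto (fun δ : ℝ => δ * |a i|) (nhdsWithin 0 (Set.Ioi 0))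
            (nhds 0) := by
          simpa using h0.mono_left nhdsWithin_le_nhds
        have := h.eventually (eventually_le_nhds (by norm_num : (0:ℝ) < 1/2))
        exact this
      exact e1.and e2
    obtain ⟨δ, hδprops, hδpos⟩ :=
      ((Filter.eventually_all.mpr hev).and self_mem_nhdsWithin).exists
    -- Lipschitz bound on [z₀-1, z₀+1]
    obtain ⟨L, hL⟩ := (isCompact_Icc : IsCompact (Set.Icc (z₀-1) (z₀+1))).exists_bound_of_continuousOn
      ((hσ.continuous_deriv one_le_two).continuousOn)
    have hL0 : 0 ≤ L := le_trans (norm_nonneg _) (hL z₀ ⟨by linarith, by linarith⟩)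
    have hlip : ∀ u ∈ Set.Icc (z₀-1) (z₀+1), ∀ v ∈ Set.Icc (z₀-1) (z₀+1),
        |σ u - σ v| ≤ L * |u - v| := by
      intro u hu v hv
      have := Convex.norm_image_sub_le_of_norm_deriv_le
        (fun x _ => (hσ.differentiable (by norm_num)) x) hL (convex_Icc _ _) hv hu
      simpa [Real.norm_eq_abs] using this
    -- choose η
    set η : ℝ := min (1/2) (ε' * (δ * |c|) / (L + 1)) with hηdef
    have hη : 0 < η := by
      apply lt_min (by norm_num)
      positivity
    obtain ⟨A', hA'aff, hA'⟩ := IH δ z₀ η hη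
    set Alast : ℝ → ℝ := fun y => p * ((y - σ z₀) / (δ * c)) + q with hAlast
    refine ⟨Fin.snoc A' Alast, ?_, ?_⟩
    · intro k
      refine Fin.lastCases ?_ ?_ k
      · refine ⟨p / (δ * c), -(p * σ z₀ / (δ * c)) + q, ?_⟩
        simp only [Fin.snoc_last]
        funext y
        rw [hAlast]
        ring
      · intro j
        simpa [Fin.snoc_castSucc] using hA'aff j
    · intro i
      rw [altComp_snoc]
      set y := altComp σ H A' (a i) with hy
      set w := z₀ + δ * a i with hw
      have h1 : |y - (δ * a i + z₀)| < η := hA' i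
      have h1' : |y - w| < η := by rw [hw]; rw [show z₀ + δ * a i = δ * a i + z₀ by ring]; exact h1
      obtain ⟨hi1, hi2⟩ := hδprops i
      have habs : |δ * a i| = δ * |a i| := by
        rw [abs_mul, abs_of_pos hδpos]
      have hymem : y ∈ Set.Icc (z₀-1) (z₀+1) := by
        have : |y - z₀| ≤ 1 := by
          have := abs_sub_abs_le_abs_sub y w
          have t : |y - z₀| ≤ |y - w| + |w - z₀| := by
            have := abs_sub_le y w z₀; exact this
          have hwz : |w - z₀| = δ * |a i| := by rw [hw]; simpa using habs
          have hη2 : η ≤ 1/2 := min_le_left _ _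
          rw [hwz] at t
          linarith
        have := abs_le.mp this
        exact ⟨by linarith [this.1], by linarith [this.2]⟩
      have hwmem : w ∈ Set.Icc (z₀-1) (z₀+1) := by
        have : |w - z₀| ≤ 1/2 := by rw [hw]; simpa using habs.le.trans hi2
        have := abs_le.mp this
        exact ⟨by linarith [this.1], by linarith [this.2]⟩
      have hδc : 0 < δ * |c| := mul_pos hδpos hcabs
      -- term 1
      have t1 : |(σ y - σ w) / (δ * c)| ≤ ε' := by
        rw [abs_div, abs_mul, abs_of_pos hδpos]
        rw [div_le_iff₀ hδc]
        calc |σ y - σ w| ≤ L * |y - w| := hlip y hymem w hwmem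
          _ ≤ L * η := by
              exact mul_le_mul_of_nonneg_left h1'.le hL0
          _ ≤ ε' * (δ * |c|) := by
              have hη3 : η ≤ ε' * (δ * |c|) / (L + 1) := min_le_right _ _
              have : L * η ≤ (L + 1) * η := by nlinarith [hη.le]
              calc L * η ≤ (L + 1) * η := this
                _ ≤ (L + 1) * (ε' * (δ * |c|) / (L + 1)) :=
                    mul_le_mul_of_nonneg_left hη3 (by linarith)
                _ = ε' * (δ * |c|) := by field_simp
      -- term 2
      have t2 : |(σ w - σ z₀) / (δ * c) - a i| < ε' := hi1
      have hsplit : (σ y - σ z₀) / (δ * c) - a i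
          = (σ y - σ w) / (δ * c) + ((σ w - σ z₀) / (δ * c) - a i) := by
        field_simp
        ring
      have inner : |(σ y - σ z₀) / (δ * c) - a i| < 2 * ε' := by
        rw [hsplit]
        calc |(σ y - σ w) / (δ * c) + ((σ w - σ z₀) / (δ * c) - a i)|
            ≤ |(σ y - σ w) / (δ * c)| + |(σ w - σ z₀) / (δ * c) - a i| := abs_add_le _ _
          _ < ε' + ε' := by linarith [t1, t2]
          _ = 2 * ε' := by ring
      have hfinal : Alast (σ y) - (p * a i + q) = p * ((σ y - σ z₀) / (δ * c) - a i) := by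
        rw [hAlast]; ring
      rw [hfinal, abs_mul]
      calc |p| * |(σ y - σ z₀) / (δ * c) - a i| ≤ |p| * (2 * ε') :=
            mul_le_mul_of_nonneg_left inner.le (abs_nonneg _)
        _ = ε * (|p| / (|p| + 1)) := by rw [hε'def]; field_simp
        _ < ε * 1 := by
            apply mul_lt_mul_of_pos_left _ hε
            rw [div_lt_one hpos]; linarith [abs_nonneg p]
        _ = ε := mul_one ε

/-- If `σ` is admissible, then for every `H ≥ 1`, every finite list of reals and every
`ε > 0`, there are affine maps `A_0, …, A_H` such that the depth-`H` alternating
composition `A_H ∘ σ ∘ ⋯ ∘ σ ∘ A_0` approximates the identity within `ε` on the list. -/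
theorem stmt_15 (σ : ℝ → ℝ) (hσ : ContDiff ℝ 2 σ) (z₀ : ℝ) (hz₀ : deriv σ z₀ ≠ 0)
    (H : ℕ) (hH : 1 ≤ H) (N : ℕ) (a : Fin N → ℝ) (ε : ℝ) (hε : 0 < ε) :
    ∃ A : Fin (H + 1) → ℝ → ℝ,
      (∀ k, ∃ c d : ℝ, A k = fun x => c * x + d) ∧
      ∀ i : Fin N, |altComp σ H A (a i) - a i| < ε := by
  obtain ⟨A, haff, hA⟩ := key σ hσ z₀ hz₀ N a H 1 0 ε hε
  exact ⟨A, haff, fun i => by simpa using hA i⟩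
end
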